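/- arXiv:2006.16715 — 3 statements merged into one kernel-verified Lean document; each statement's English description precedes it below -/
import Mathlib

section
/- Given two choices of data (Ĩ, χ) and (Ĩ′, χ′) with associated calibrations φ and φ′, one has φ(m) − φ′(P_{χ′}⁻¹ P_χ (m)) ∈ ker(h_σ) for every m ∈ ℂ^N. Consequently the subgroups φ(ℤ^N) + ker(h_σ) and φ′(ℤ^N) + ker(h_σ) of ℂ^I coincide (so the induced action on ℂ^I depends only on the cone σ and not on the choice of basis and permutation). -/
open Pointwise

/-- The coordinate subspace `ℂ^I ⊆ ℂ^N`: vectors supported on the index set `I`. -/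
noncomputable def coordSubmodule (N : ℕ) (I : Set (Fin N)) : Submodule ℂ (Fin N → ℂ) where
  carrier := {x | ∀ i ∉ I, x i = 0}
  add_mem' := fun ha hb i hi => by simp [Pi.add_apply, ha i hi, hb i hi]
  zero_mem' := fun i _ => rfl
  smul_mem' := fun c x hx i hi => by simp [Pi.smul_apply, hx i hi]

/-- The integer lattice `ℤ^N` as a subset of `ℂ^N`. -/
def intLattice (N : ℕ) : Set (Fin N → ℂ) :=
  {m | ∀ k, ∃ a : ℤ, m k = (a : ℂ)}

lemma perm_map_apply {N : ℕ} (Q : (Fin N → ℂ) →ₗ[ℂ] (Fin N → ℂ)) (σ : Equiv.Perm (Fin N))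
    (hQ : ∀ k, Q (Pi.single k 1) = Pi.single (σ k) 1) (m : Fin N → ℂ) (j : Fin N) :
    Q m j = m (σ⁻¹ j) := by
  have heq : (LinearMap.proj j).comp Q = (LinearMap.proj (σ⁻¹ j) : (Fin N → ℂ) →ₗ[ℂ] ℂ) := by
    apply Module.Basis.ext (Pi.basisFun ℂ (Fin N))
    intro k
    simp only [Pi.basisFun_apply, LinearMap.comp_apply, LinearMap.proj_apply, hQ]
    simp only [Pi.single_apply]
    congr 1
    simp only [eq_iff_iff]
    constructor
    · rintro rfl; simp
    · rintro rfl; simp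

  simpa using LinearMap.congr_fun heq m

/-- Given two choices of data `(Ĩ, χ)` and `(Ĩ′, χ′)` with associated
calibrations `φ` and `φ′`, one has `φ(m) − φ′(P_{χ′}⁻¹ P_χ m) ∈ ker h_σ` for every
`m ∈ ℂ^N`. Consequently the subgroups `φ(ℤ^N) + ker h_σ` and `φ′(ℤ^N) + ker h_σ` of `ℂ^I`
coincide (so the induced action on `ℂ^I` depends only on `σ`). -/
theorem statement3 {N d : ℕ} (hd : 1 ≤ d) (hdN : d ≤ N)
    (v : Fin N → (Fin d → ℂ)) (hreal : ∀ k i, (v k i).im = 0)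
    (h : (Fin N → ℂ) →ₗ[ℂ] (Fin d → ℂ)) (hv : ∀ k, h (Pi.single k 1) = v k)
    (I : Set (Fin N))
    (hsurj : ∀ y : Fin d → ℂ, ∃ x ∈ coordSubmodule N I, h x = y)
    -- first choice (Ĩ, χ, ψ, φ)
    (Itilde : Set (Fin N)) (hII : Itilde ⊆ I)
    (hli : LinearIndependent ℂ (fun i : Itilde => v i))
    (hspan : Submodule.span ℂ (Set.range (fun i : Itilde => v i)) = ⊤)
    (ψ : (coordSubmodule N Itilde) ≃ₗ[ℂ] (Fin d → ℂ))
    (hψ : ∀ x : coordSubmodule N Itilde, ψ x = h (x : Fin N → ℂ))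
    (χ : Equiv.Perm (Fin N)) (hχ : ∀ k : Fin N, (k : ℕ) < d ↔ χ k ∈ Itilde)
    (P : (Fin N → ℂ) →ₗ[ℂ] (Fin N → ℂ))
    (hP : ∀ k, P (Pi.single k 1) = Pi.single (χ k) 1)
    (φ : (Fin N → ℂ) →ₗ[ℂ] (Fin N → ℂ))
    (hφ : ∀ m, φ m = ((ψ.symm (h (P m)) : coordSubmodule N Itilde) : Fin N → ℂ))
    -- second choice (Ĩ′, χ′, ψ′, φ′)
    (Itilde' : Set (Fin N)) (hII' : Itilde' ⊆ I)
    (hli' : LinearIndependent ℂ (fun i : Itilde' => v i))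
    (hspan' : Submodule.span ℂ (Set.range (fun i : Itilde' => v i)) = ⊤)
    (ψ' : (coordSubmodule N Itilde') ≃ₗ[ℂ] (Fin d → ℂ))
    (hψ' : ∀ x : coordSubmodule N Itilde', ψ' x = h (x : Fin N → ℂ))
    (χ' : Equiv.Perm (Fin N)) (hχ' : ∀ k : Fin N, (k : ℕ) < d ↔ χ' k ∈ Itilde')
    (P' : (Fin N → ℂ) →ₗ[ℂ] (Fin N → ℂ))
    (hP' : ∀ k, P' (Pi.single k 1) = Pi.single (χ' k) 1)
    (φ' : (Fin N → ℂ) →ₗ[ℂ] (Fin N → ℂ))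
    (hφ' : ∀ m, φ' m = ((ψ'.symm (h (P' m)) : coordSubmodule N Itilde') : Fin N → ℂ))
    -- Q = P_{χ′}⁻¹ ∘ P_χ, i.e. the linear map e_k ↦ e_{χ′⁻¹(χ k)}
    (Q : (Fin N → ℂ) →ₗ[ℂ] (Fin N → ℂ))
    (hQ : ∀ k, Q (Pi.single k 1) = Pi.single (χ'⁻¹ (χ k)) 1) :
    (∀ m : Fin N → ℂ, φ m - φ' (Q m) ∈ coordSubmodule N I ⊓ LinearMap.ker h) ∧
    (⇑φ '' intLattice N) + ((coordSubmodule N I ⊓ LinearMap.ker h : Submodule ℂ (Fin N → ℂ)) : Set (Fin N → ℂ))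
      = (⇑φ' '' intLattice N) + ((coordSubmodule N I ⊓ LinearMap.ker h : Submodule ℂ (Fin N → ℂ)) : Set (Fin N → ℂ)) := by
  -- σ : the permutation underlying Q
  set σ : Equiv.Perm (Fin N) := χ'⁻¹ * χ with hσ
  have hQσ : ∀ k, Q (Pi.single k 1) = Pi.single (σ k) 1 := by
    intro k; rw [hQ]; rfl
  have hQapp : ∀ (m : Fin N → ℂ) (j : Fin N), Q m j = m (σ⁻¹ j) :=
    perm_map_apply Q σ hQσ
  -- P' ∘ Q = P
  have hPQ : P'.comp Q = P := by
    apply Module.Basis.ext (Pi.basisFun ℂ (Fin N))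
    intro k
    simp only [Pi.basisFun_apply, LinearMap.comp_apply, hQσ, hP', hP, hσ]
    congr 1
    simp [Equiv.Perm.mul_apply]
  -- h ∘ φ = h ∘ P and h ∘ φ' = h ∘ P'
  have hhφ : ∀ m, h (φ m) = h (P m) := by
    intro m
    rw [hφ, ← hψ]
    simp
  have hhφ' : ∀ m, h (φ' m) = h (P' m) := by
    intro m
    rw [hφ', ← hψ']
    simp
  -- key claim
  have key : ∀ m : Fin N → ℂ, φ m - φ' (Q m) ∈ coordSubmodule N I ⊓ LinearMap.ker h := by
    intro m
    refine Submodule.mem_inf.mpr ⟨?_, ?_⟩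
    · intro i hi
      have h1 : φ m i = 0 := by
        rw [hφ]
        exact (ψ.symm (h (P m))).2 i (fun hmem => hi (hII hmem))
      have h2 : φ' (Q m) i = 0 := by
        rw [hφ']
        exact (ψ'.symm (h (P' (Q m)))).2 i (fun hmem => hi (hII' hmem))
      simp [Pi.sub_apply, h1, h2]
    · rw [LinearMap.mem_ker, map_sub, hhφ, hhφ', ← hPQ]
      simp
  refine ⟨key, ?_⟩
  ext x
  simp only [Set.mem_add, Set.mem_image]
  constructor
  · rintro ⟨a, ⟨m, hm, rfl⟩, b, hb, rfl⟩
    refine ⟨φ' (Q m), ⟨Q m, ?_, rfl⟩, (φ m - φ' (Q m)) + b, ?_, by ring⟩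
    · intro j
      obtain ⟨a, ha⟩ := hm (σ⁻¹ j)
      exact ⟨a, by rw [hQapp m j, ha]⟩
    · exact add_mem (key m) hb
  · rintro ⟨a, ⟨m', hm', rfl⟩, b, hb, rfl⟩
    set m : Fin N → ℂ := fun k => m' (σ k) with hmdef
    have hQm : Q m = m' := by
      funext j
      rw [hQapp m j, hmdef]
      simp
    refine ⟨φ m, ⟨m, fun k => hm' (σ k), rfl⟩, b - (φ m - φ' (Q m)), ?_, ?_⟩
    · exact sub_mem hb (key m)
    · rw [hQm]; ring
end

section
/- As subgroups of ℂ^I one has the equality φ(ℤ^N) + ker(h_σ) = h_σ⁻¹(Γ), i.e. the sum of the image of ℤ^N under the calibration φ and the kernel of h_σ is exactly the preimage of Γ under h_σ. -/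
open Pointwise

/-- As subgroups of `ℂ^I` one has `φ(ℤ^N) + ker h_σ = h_σ⁻¹(Γ)`, i.e.
the sum of the image of `ℤ^N` under the calibration `φ` and the kernel of `h_σ` is
exactly the preimage under `h_σ` of `Γ = h(ℤ^N)`. -/
theorem statement4 {N d : ℕ} (hd : 1 ≤ d) (hdN : d ≤ N)
    (v : Fin N → (Fin d → ℂ)) (hreal : ∀ k i, (v k i).im = 0)
    (h : (Fin N → ℂ) →ₗ[ℂ] (Fin d → ℂ)) (hv : ∀ k, h (Pi.single k 1) = v k)
    (I Itilde : Set (Fin N)) (hII : Itilde ⊆ I)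
    (hsurj : ∀ y : Fin d → ℂ, ∃ x ∈ coordSubmodule N I, h x = y)
    (hli : LinearIndependent ℂ (fun i : Itilde => v i))
    (hspan : Submodule.span ℂ (Set.range (fun i : Itilde => v i)) = ⊤)
    (ψ : (coordSubmodule N Itilde) ≃ₗ[ℂ] (Fin d → ℂ))
    (hψ : ∀ x : coordSubmodule N Itilde, ψ x = h (x : Fin N → ℂ))
    (χ : Equiv.Perm (Fin N)) (hχ : ∀ k : Fin N, (k : ℕ) < d ↔ χ k ∈ Itilde)
    (P : (Fin N → ℂ) →ₗ[ℂ] (Fin N → ℂ))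
    (hP : ∀ k, P (Pi.single k 1) = Pi.single (χ k) 1)
    (φ : (Fin N → ℂ) →ₗ[ℂ] (Fin N → ℂ))
    (hφ : ∀ m, φ m = ((ψ.symm (h (P m)) : coordSubmodule N Itilde) : Fin N → ℂ)) :
    (⇑φ '' intLattice N) + ((coordSubmodule N I ⊓ LinearMap.ker h : Submodule ℂ (Fin N → ℂ)) : Set (Fin N → ℂ))
      = {x : Fin N → ℂ | x ∈ coordSubmodule N I ∧ h x ∈ ⇑h '' intLattice N} := by
  -- P acts as coordinate permutation
  have hPapp : ∀ (x : Fin N → ℂ) (j : Fin N), P x j = x (χ.symm j) := by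
    intro x j
    have hx : x = ∑ k, x k • (Pi.single k (1 : ℂ) : Fin N → ℂ) := by
      funext i
      simp [Finset.sum_apply, Pi.single_apply]
    rw [hx, map_sum]
    simp only [map_smul, hP, Finset.sum_apply, Pi.smul_apply, Pi.single_apply,
      smul_eq_mul, mul_ite, mul_one, mul_zero]
    rw [Finset.sum_eq_single (χ.symm j)]
    · simp
    · intro k _ hk
      rw [if_neg]
      intro hc
      exact hk (by rw [hc, Equiv.symm_apply_apply])
    · simp
  have hφmem : ∀ m, φ m ∈ coordSubmodule N Itilde := by
    intro m
    rw [hφ]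
    exact (ψ.symm (h (P m))).2
  have hφI : ∀ m, φ m ∈ coordSubmodule N I := by
    intro m i hi
    exact hφmem m i (fun hmem => hi (hII hmem))
  have hhφ : ∀ m, h (φ m) = h (P m) := by
    intro m
    rw [hφ, ← hψ]
    simp
  ext x
  constructor
  · rintro ⟨a, ⟨m, hm, rfl⟩, b, hb, rfl⟩
    obtain ⟨hbI, hbker⟩ := hb
    constructor
    · exact (coordSubmodule N I).add_mem (hφI m) hbI
    · refine ⟨P m, ?_, ?_⟩
      · intro k
        obtain ⟨a, ha⟩ := hm (χ.symm k)
        exact ⟨a, by rw [hPapp m k, ha]⟩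
      · rw [map_add, hhφ m, LinearMap.mem_ker.mp hbker, add_zero]
  · rintro ⟨hxI, m, hm, hmx⟩
    set m₀ : Fin N → ℂ := fun k => m (χ k) with hm₀
    have hPm₀ : P m₀ = m := by
      funext j
      rw [hPapp]
      simp [hm₀]
    refine ⟨φ m₀, ⟨m₀, fun k => hm (χ k), rfl⟩, x - φ m₀, ⟨?_, ?_⟩, by simp⟩
    · exact (coordSubmodule N I).sub_mem hxI (hφI m₀)
    · rw [SetLike.mem_coe, LinearMap.mem_ker, map_sub, hhφ, hPm₀, hmx, sub_self]
end

section
/- Writing ℤ^N = ℤ^d × ℤ^{N−d}, the set { E(φ(0 ⊕ m) + t) : m ∈ ℤ^{N−d}, t ∈ ker(h_σ) } equals E(h_σ⁻¹(Γ)) as subsets (indeed subgroups) of (ℂ^×)^I; that is, the group of multiplicative translations generated by the ℤ^{N−d}-action through φ and by E(ker(h_σ)) coincides with the exponential of the preimage of Γ under h_σ. -/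
open Pointwise

/-- `0 ⊕ ℤ^{N−d}`: the integer points of `ℂ^N` whose first `d` coordinates vanish. -/
def intLatticeLast (N d : ℕ) : Set (Fin N → ℂ) :=
  {m | (∀ k, ∃ a : ℤ, m k = (a : ℂ)) ∧ ∀ k : Fin N, (k : ℕ) < d → m k = 0}

/-- The componentwise exponential `E(z)_i = exp(2πi z_i)`. -/
noncomputable def Emap (N : ℕ) (z : Fin N → ℂ) : Fin N → ℂ :=
  fun i => Complex.exp (2 * (Real.pi : ℂ) * Complex.I * z i)

/-- Writing `ℤ^N = ℤ^d × ℤ^{N−d}`, the set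
`{E(φ(0 ⊕ m) + t) : m ∈ ℤ^{N−d}, t ∈ ker h_σ}` equals `E(h_σ⁻¹(Γ))`: the group
of multiplicative translations generated by the `ℤ^{N−d}`-action through `φ` and by
`E(ker h_σ)` coincides with the exponential of the preimage of `Γ` under `h_σ`. -/
theorem statement5 {N d : ℕ} (hd : 1 ≤ d) (hdN : d ≤ N)
    (v : Fin N → (Fin d → ℂ)) (hreal : ∀ k i, (v k i).im = 0)
    (h : (Fin N → ℂ) →ₗ[ℂ] (Fin d → ℂ)) (hv : ∀ k, h (Pi.single k 1) = v k)
    (I Itilde : Set (Fin N)) (hII : Itilde ⊆ I)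
    (hsurj : ∀ y : Fin d → ℂ, ∃ x ∈ coordSubmodule N I, h x = y)
    (hli : LinearIndependent ℂ (fun i : Itilde => v i))
    (hspan : Submodule.span ℂ (Set.range (fun i : Itilde => v i)) = ⊤)
    (ψ : (coordSubmodule N Itilde) ≃ₗ[ℂ] (Fin d → ℂ))
    (hψ : ∀ x : coordSubmodule N Itilde, ψ x = h (x : Fin N → ℂ))
    (χ : Equiv.Perm (Fin N)) (hχ : ∀ k : Fin N, (k : ℕ) < d ↔ χ k ∈ Itilde)
    (P : (Fin N → ℂ) →ₗ[ℂ] (Fin N → ℂ))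
    (hP : ∀ k, P (Pi.single k 1) = Pi.single (χ k) 1)
    (φ : (Fin N → ℂ) →ₗ[ℂ] (Fin N → ℂ))
    (hφ : ∀ m, φ m = ((ψ.symm (h (P m)) : coordSubmodule N Itilde) : Fin N → ℂ)) :
    Emap N '' ((⇑φ '' intLatticeLast N d) +
        ((coordSubmodule N I ⊓ LinearMap.ker h : Submodule ℂ (Fin N → ℂ)) : Set (Fin N → ℂ)))
      = Emap N '' {x : Fin N → ℂ | x ∈ coordSubmodule N I ∧ h x ∈ ⇑h '' intLattice N} := by
  -- P is the permutation of coordinates by χ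
  have hPapply : ∀ x : Fin N → ℂ, ∀ j, P x j = x (χ.symm j) := by
    have : P = LinearMap.funLeft ℂ ℂ χ.symm := by
      apply Module.Basis.ext (Pi.basisFun ℂ (Fin N))
      intro k
      simp only [Pi.basisFun_apply]
      rw [hP]
      ext j
      simp only [LinearMap.funLeft_apply, Pi.single_apply]
      congr 1
      simp [Equiv.symm_apply_eq]
    intro x j; rw [this]; rfl
  -- h ∘ φ = h ∘ P
  have hφh : ∀ m, h (φ m) = h (P m) := by
    intro m
    rw [hφ, ← hψ, LinearEquiv.apply_symm_apply]
  -- φ m is in the Itilde coordinate subspace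
  have hφmem : ∀ m, φ m ∈ coordSubmodule N Itilde := by
    intro m; rw [hφ]; exact Submodule.coe_mem _
  -- Emap periodicity under integer translation
  have hE : ∀ (z w : Fin N → ℂ), (∀ k, ∃ a : ℤ, w k = (a : ℂ)) → Emap N (z + w) = Emap N z := by
    intro z w hw
    funext i
    obtain ⟨a, ha⟩ := hw i
    simp only [Emap, Pi.add_apply, ha, mul_add, Complex.exp_add]
    have h1 : Complex.exp (2 * (Real.pi : ℂ) * Complex.I * (a : ℂ)) = 1 := by
      have := Complex.exp_int_mul_two_pi_mul_I a
      rw [← this]; ring_nf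
    rw [h1, mul_one]
  ext y
  simp only [Set.mem_image, Set.mem_add, Set.mem_setOf_eq]
  constructor
  · rintro ⟨x, ⟨p, ⟨m, hm, rfl⟩, t, ht, rfl⟩, rfl⟩
    refine ⟨φ m + t, ⟨?_, ?_⟩, rfl⟩
    · exact Submodule.add_mem _ (fun i hi => hφmem m i (fun hIt => hi (hII hIt)))
        ((Set.mem_setOf_eq ▸ ht : _ ∈ (_ : Set _)) |>.1)
    · refine ⟨P m, ?_, ?_⟩
      · intro j
        obtain ⟨a, ha⟩ := hm.1 (χ.symm j)
        exact ⟨a, by rw [hPapply]; exact ha⟩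
      · have ht0 : h t = 0 := ((Submodule.mem_inf.mp ht).2)
        rw [map_add, ht0, add_zero, hφh]
  · rintro ⟨x, ⟨hxI, n, hn, hnx⟩, rfl⟩
    -- decompose n' = n ∘ χ into first-d part a and last part m
    set n' : Fin N → ℂ := fun k => n (χ k) with hn'def
    set m : Fin N → ℂ := fun k => if (k : ℕ) < d then 0 else n' k with hmdef
    set a : Fin N → ℂ := fun k => if (k : ℕ) < d then n' k else 0 with hadef
    have ham : a + m = n' := by
      funext k; by_cases hk : (k : ℕ) < d <;> simp [hadef, hmdef, hk]
    have hPn' : P n' = n := by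
      funext j; rw [hPapply]; simp [hn'def]
    -- P a lies in the Itilde coordinate subspace and is integral
    have hPaInt : ∀ j, ∃ b : ℤ, P a j = (b : ℂ) := by
      intro j
      rw [hPapply]
      by_cases hk : ((χ.symm j : Fin N) : ℕ) < d
      · obtain ⟨b, hb⟩ := hn (χ (χ.symm j))
        exact ⟨b, by simpa [hadef, hn'def, hk] using hb⟩
      · exact ⟨0, by simp [hadef, hk]⟩
    have hPaMem : P a ∈ coordSubmodule N Itilde := by
      intro j hj
      rw [hPapply]
      have : ¬ ((χ.symm j : Fin N) : ℕ) < d := by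
        intro hlt
        exact hj (by simpa using (hχ (χ.symm j)).mp hlt)
      simp [hadef, this]
    -- φ a = P a
    have hφa : φ a = P a := by
      rw [hφ]
      have : ψ.symm (h (P a)) = ⟨P a, hPaMem⟩ := by
        apply ψ.injective
        rw [LinearEquiv.apply_symm_apply, hψ]
      rw [this]
    have hmLast : m ∈ intLatticeLast N d := by
      constructor
      · intro k
        by_cases hk : (k : ℕ) < d
        · exact ⟨0, by simp [hmdef, hk]⟩
        · obtain ⟨b, hb⟩ := hn (χ k)
          exact ⟨b, by simpa [hmdef, hn'def, hk] using hb⟩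
      · intro k hk; simp [hmdef, hk]
    set t : Fin N → ℂ := x - φ n' with htdef
    have htmem : t ∈ (coordSubmodule N I ⊓ LinearMap.ker h : Submodule ℂ (Fin N → ℂ)) := by
      refine Submodule.mem_inf.mpr ⟨?_, ?_⟩
      · exact Submodule.sub_mem _ hxI (fun i hi => hφmem n' i (fun hIt => hi (hII hIt)))
      · rw [LinearMap.mem_ker, map_sub, hφh, hPn', hnx, sub_self]
    refine ⟨φ m + t, ⟨φ m, ⟨m, hmLast, rfl⟩, t, htmem, rfl⟩, ?_⟩
    have hx : φ m + t = x - P a := by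
      rw [htdef, ← ham, map_add, hφa]; ring
    rw [hx]
    have := hE (x - P a) (P a) hPaInt
    rw [sub_add_cancel] at this
    exact this.symm
end
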